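/- Let Ξ = (Ξ_1,…,Ξ_n) : [0,1]^n → [0,1]^n be twice continuously differentiable and satisfy conditions (a), (b), (c) [see context], define Φ̃ : [0,1]^n → [0,1]^n by Φ̃_i(x) = (1−δ)x_i + (1−x_i)Ξ_i(x), suppose λmax((1−δ)I_n + βA) > 1, and suppose x* is the unique fixed point of Φ̃ in [0,1]^n other than the origin. Then the Jacobian matrix of Φ̃ at x* has no real eigenvalue greater than or equal to 1. -/

import Mathlib

open Matrix Finset

/-- The largest eigenvalue of a (symmetric) real matrix, as the supremum of its real spectrum. -/
noncomputable def lamMax {n : ℕ} (M : Matrix (Fin n) (Fin n) ℝ) : ℝ :=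
  sSup (spectrum ℝ M)

section Aux

lemma lemA' {n : ℕ} {f : (Fin n → ℝ) → ℝ} (hf : Differentiable ℝ f) (x : Fin n → ℝ) (t : ℝ) :
    HasDerivAt (fun s : ℝ => f (s • x)) (fderiv ℝ f (t • x) x) t := by
  have h1 : HasDerivAt (fun s : ℝ => s • x) x t := by
    simpa using (hasDerivAt_id t).smul_const x
  exact ((hf (t • x)).hasFDerivAt).comp_hasDerivAt t h1

lemma lemB' {n : ℕ} (L : (Fin n → ℝ) →L[ℝ] ℝ) (x : Fin n → ℝ) :
    L x = ∑ j, x j * L (Pi.single j 1) := by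
  have hx : x = ∑ j, x j • (Pi.single j (1:ℝ) : Fin n → ℝ) := by
    ext k; simp [Pi.single_apply, eq_comm]
  conv_lhs => rw [hx]
  simp only [map_sum, _root_.map_smul, smul_eq_mul]

lemma lemMem' {n : ℕ} {x : Fin n → ℝ} (hx : x ∈ Set.Icc (0 : Fin n → ℝ) 1) {t : ℝ}
    (ht : t ∈ Set.Icc (0:ℝ) 1) : t • x ∈ Set.Icc (0 : Fin n → ℝ) 1 := by
  constructor <;> intro j <;>
    [exact mul_nonneg ht.1 (hx.1 j);
     exact mul_le_one₀ ht.2 (hx.1 j) (hx.2 j)]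

lemma lemMVT' {n : ℕ} {f : (Fin n → ℝ) → ℝ} (hf : Differentiable ℝ f) (x : Fin n → ℝ) :
    ∃ c ∈ Set.Ioo (0:ℝ) 1, f x - f 0 = fderiv ℝ f (c • x) x := by
  obtain ⟨c, hc, heq⟩ := exists_hasDerivAt_eq_slope (fun s : ℝ => f (s • x))
    (fun s => fderiv ℝ f (s • x) x) one_pos
    (by
      apply Continuous.continuousOn
      exact hf.continuous.comp (by continuity))
    (fun s _ => lemA' hf x s)
  refine ⟨c, hc, ?_⟩
  rw [heq]; simp

lemma lemAnti' {n : ℕ} {f : (Fin n → ℝ) → ℝ} (hf : ContDiff ℝ 2 f)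
    {x : Fin n → ℝ} (hx : x ∈ Set.Icc (0 : Fin n → ℝ) 1)
    (hc2 : ∀ y ∈ Set.Icc (0 : Fin n → ℝ) 1, ∀ j k,
      fderiv ℝ (fun z => fderiv ℝ f z (Pi.single k 1)) y (Pi.single j 1) ≤ 0) :
    AntitoneOn (fun t : ℝ => fderiv ℝ f (t • x) x) (Set.Icc (0:ℝ) 1) := by
  have hDf : ContDiff ℝ 1 (fderiv ℝ f) := hf.fderiv_right (by norm_num)
  set F : Fin n → (Fin n → ℝ) → ℝ := fun k y => fderiv ℝ f y (Pi.single k 1) with hF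
  have hFdiff : ∀ k, Differentiable ℝ (F k) := fun k =>
    (hDf.differentiable (by norm_num)).clm_apply (differentiable_const _)
  have hφψ : (fun t : ℝ => fderiv ℝ f (t • x) x)
      = fun t : ℝ => ∑ k, x k * F k (t • x) := by
    funext t; exact lemB' _ x
  rw [hφψ]
  have hder : ∀ t : ℝ, HasDerivAt (fun s : ℝ => ∑ k, x k * F k (s • x))
      (∑ k, x k * fderiv ℝ (F k) (t • x) x) t := by
    intro t
    exact HasDerivAt.fun_sum fun k _ => ((lemA' (hFdiff k) x t).const_mul (x k))
  apply antitoneOn_of_deriv_nonpos (convex_Icc 0 1)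
  · exact fun t _ => ((hder t).differentiableAt).continuousAt.continuousWithinAt
  · exact fun t _ => ((hder t).differentiableAt).differentiableWithinAt
  · intro t ht
    rw [interior_Icc] at ht
    rw [(hder t).deriv]
    apply Finset.sum_nonpos
    intro k _
    apply mul_nonpos_of_nonneg_of_nonpos (hx.1 k)
    rw [lemB']
    apply Finset.sum_nonpos
    intro j _
    apply mul_nonpos_of_nonneg_of_nonpos (hx.1 j)
    exact hc2 (t • x) (lemMem' hx ⟨le_of_lt ht.1, le_of_lt ht.2⟩) j k

lemma lemJac' {n : ℕ} {g : (Fin n → ℝ) → ℝ} (hg : Differentiable ℝ g) (δ : ℝ)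
    (x : Fin n → ℝ) (i j : Fin n) :
    fderiv ℝ (fun y : Fin n → ℝ => (1 - δ) * y i + (1 - y i) * g y) x (Pi.single j 1)
      = (if i = j then (1 - δ) - g x else 0)
        + (1 - x i) * fderiv ℝ g x (Pi.single j 1) := by
  have hP : HasFDerivAt (fun y : Fin n → ℝ => y i)
      (ContinuousLinearMap.proj i : (Fin n → ℝ) →L[ℝ] ℝ) x := hasFDerivAt_apply (𝕜 := ℝ) i x
  have hg' : HasFDerivAt g (fderiv ℝ g x) x := (hg x).hasFDerivAt
  have h1 : HasFDerivAt (fun y : Fin n → ℝ => (1 - δ) * y i)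
      ((1 - δ) • (ContinuousLinearMap.proj i : (Fin n → ℝ) →L[ℝ] ℝ)) x := hP.const_mul _
  have h2 : HasFDerivAt (fun y : Fin n → ℝ => 1 - y i)
      ((0:(Fin n → ℝ) →L[ℝ] ℝ) - ContinuousLinearMap.proj i) x :=
    (hasFDerivAt_const (1:ℝ) x).sub hP
  have h3 := h2.mul hg'
  have h4 : HasFDerivAt (fun y : Fin n → ℝ => (1 - δ) * y i + (1 - y i) * g y) _ x :=
    h1.add h3
  rw [h4.fderiv]
  simp only [ContinuousLinearMap.add_apply, ContinuousLinearMap.smul_apply,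
    ContinuousLinearMap.sub_apply, ContinuousLinearMap.zero_apply,
    ContinuousLinearMap.proj_apply, smul_eq_mul]
  rcases eq_or_ne i j with h | h
  · subst h; simp [Pi.single_apply]; ring
  · simp [Pi.single_apply, Ne.symm h, h]

lemma lemEigen' {n : ℕ} (J : Matrix (Fin n) (Fin n) ℝ) (r : ℝ) (hr : r ∈ spectrum ℝ J) :
    ∃ w : Fin n → ℝ, w ≠ 0 ∧ J.mulVec w = r • w := by
  have h1 : r ∈ spectrum ℝ (Matrix.toLinAlgEquiv' J) := by
    rwa [AlgEquiv.spectrum_eq Matrix.toLinAlgEquiv' J]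
  have h2 : Module.End.HasEigenvalue (Matrix.toLinAlgEquiv' J) r :=
    Module.End.HasEigenvalue.of_mem_spectrum h1
  obtain ⟨w, hw⟩ := h2.exists_hasEigenvector
  refine ⟨w, hw.2, ?_⟩
  have := hw.apply_eq_smul
  simpa [Matrix.toLinAlgEquiv'_apply, Matrix.toLin'_apply] using this

end Aux

/-- Let `Ξ` satisfy conditions (a)–(c), let
`Φ̃_i(x) = (1−δ)x_i + (1−x_i)Ξ_i(x)`, suppose `λmax((1−δ)I + βA) > 1` and that `x*` is the
unique fixed point of `Φ̃` in `[0,1]^n` other than the origin. Then the Jacobian of `Φ̃` at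
`x*` has no real eigenvalue `≥ 1`. -/
theorem stmt11 {n : ℕ} (hn : 1 ≤ n) (G : SimpleGraph (Fin n)) [DecidableRel G.Adj]
    (hG : G.Connected) (β δ : ℝ) (hβ : β ∈ Set.Ioo (0 : ℝ) 1) (hδ : δ ∈ Set.Ioo (0 : ℝ) 1)
    (Ξ : (Fin n → ℝ) → Fin n → ℝ)
    (hmap : ∀ x ∈ Set.Icc (0 : Fin n → ℝ) 1, Ξ x ∈ Set.Icc (0 : Fin n → ℝ) 1)
    (hC2 : ContDiff ℝ 2 Ξ)
    -- (a)
    (ha0 : Ξ 0 = 0)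
    (ha1 : ∀ i j, fderiv ℝ (fun y => Ξ y i) 0 (Pi.single j 1) = β * G.adjMatrix ℝ i j)
    -- (b)
    (hb_pos : ∀ x ∈ Set.Icc (0 : Fin n → ℝ) 1, ∀ i j, G.Adj j i →
      0 < fderiv ℝ (fun y => Ξ y i) x (Pi.single j 1))
    (hb_zero : ∀ x ∈ Set.Icc (0 : Fin n → ℝ) 1, ∀ i j, ¬ G.Adj j i →
      fderiv ℝ (fun y => Ξ y i) x (Pi.single j 1) = 0)
    -- (c)
    (hc : ∀ x ∈ Set.Icc (0 : Fin n → ℝ) 1, ∀ i j k,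
      fderiv ℝ (fun y => fderiv ℝ (fun z => Ξ z i) y (Pi.single k 1)) x (Pi.single j 1) ≤ 0)
    (phiT : (Fin n → ℝ) → Fin n → ℝ)
    (hphiT : ∀ x i, phiT x i = (1 - δ) * x i + (1 - x i) * Ξ x i)
    (hthr : 1 < lamMax ((1 - δ) • (1 : Matrix (Fin n) (Fin n) ℝ) + β • G.adjMatrix ℝ))
    (xstar : Fin n → ℝ)
    (hx_mem : xstar ∈ Set.Icc (0 : Fin n → ℝ) 1) (hx_ne : xstar ≠ 0)
    (hx_fix : phiT xstar = xstar)
    (hx_uniq : ∀ y ∈ Set.Icc (0 : Fin n → ℝ) 1, y ≠ 0 → phiT y = y → y = xstar)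
    (J : Matrix (Fin n) (Fin n) ℝ)
    (hJ : ∀ i j, J i j = fderiv ℝ (fun y => phiT y i) xstar (Pi.single j 1)) :
    ∀ r : ℝ, r ∈ spectrum ℝ J → r < 1 := by
  have hδ0 : (0:ℝ) < δ := hδ.1
  have hδ1 : δ < 1 := hδ.2
  have hΞi : ∀ i, ContDiff ℝ 2 (fun y => Ξ y i) := fun i => contDiff_pi.mp hC2 i
  have hdiff : ∀ i, Differentiable ℝ (fun y => Ξ y i) :=
    fun i => (hΞi i).differentiable (by norm_num)
  have hx0 : ∀ j, 0 ≤ xstar j := fun j => hx_mem.1 j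
  have hxle1 : ∀ j, xstar j ≤ 1 := fun j => hx_mem.2 j
  have hfe : ∀ i, δ * xstar i = (1 - xstar i) * Ξ xstar i := by
    intro i
    have h := congrFun hx_fix i
    rw [hphiT] at h; linarith
  have hΞmem := hmap xstar hx_mem
  have hΞ0 : ∀ i, 0 ≤ Ξ xstar i := fun i => hΞmem.1 i
  have hΞ1 : ∀ i, Ξ xstar i ≤ 1 := fun i => hΞmem.2 i
  have hDnn : ∀ y ∈ Set.Icc (0 : Fin n → ℝ) 1, ∀ i j,
      0 ≤ fderiv ℝ (fun y => Ξ y i) y (Pi.single j 1) := by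
    intro y hy i j
    by_cases h : G.Adj j i
    · exact (hb_pos y hy i j h).le
    · rw [hb_zero y hy i j h]
  -- positivity of Ξ at xstar given a positive neighbor
  have factP : ∀ i, (∃ k, G.Adj k i ∧ 0 < xstar k) → 0 < Ξ xstar i := by
    rintro i ⟨k, hk, hxk⟩
    obtain ⟨c, hcIoo, heq⟩ := lemMVT' (hdiff i) xstar
    have hcx : c • xstar ∈ Set.Icc (0 : Fin n → ℝ) 1 := lemMem' hx_mem ⟨hcIoo.1.le, hcIoo.2.le⟩
    rw [lemB'] at heq
    have h1 : 0 < ∑ j, xstar j * fderiv ℝ (fun y => Ξ y i) (c • xstar) (Pi.single j 1) := by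
      apply Finset.sum_pos'
      · intro j _; exact mul_nonneg (hx0 j) (hDnn _ hcx i j)
      · exact ⟨k, Finset.mem_univ k, mul_pos hxk (hb_pos _ hcx i k hk)⟩
    have hz : Ξ (0 : Fin n → ℝ) i = 0 := by rw [ha0]; rfl
    rw [hz] at heq
    linarith
  -- Ξ vanishes at xstar for isolated vertices
  have factZ : ∀ i, (∀ k, ¬ G.Adj k i) → Ξ xstar i = 0 := by
    intro i hi
    obtain ⟨c, hcIoo, heq⟩ := lemMVT' (hdiff i) xstar
    have hcx : c • xstar ∈ Set.Icc (0 : Fin n → ℝ) 1 := lemMem' hx_mem ⟨hcIoo.1.le, hcIoo.2.le⟩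
    rw [lemB'] at heq
    have hz : Ξ (0 : Fin n → ℝ) i = 0 := by rw [ha0]; rfl
    rw [hz] at heq
    have h1 : ∑ j, xstar j * fderiv ℝ (fun y => Ξ y i) (c • xstar) (Pi.single j 1) = 0 := by
      apply Finset.sum_eq_zero
      intro j _
      rw [hb_zero _ hcx i j (hi j), mul_zero]
    linarith
  -- concavity bound
  have factK : ∀ i, ∑ j, xstar j * fderiv ℝ (fun y => Ξ y i) xstar (Pi.single j 1)
      ≤ Ξ xstar i := by
    intro i
    obtain ⟨c, hcIoo, heq⟩ := lemMVT' (hdiff i) xstar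
    have hanti := lemAnti' (hΞi i) hx_mem (fun y hy j k => hc y hy i j k)
    have h1 : fderiv ℝ (fun y => Ξ y i) ((1:ℝ) • xstar) xstar
        ≤ fderiv ℝ (fun y => Ξ y i) (c • xstar) xstar :=
      hanti ⟨hcIoo.1.le, hcIoo.2.le⟩ ⟨zero_le_one, le_refl 1⟩ hcIoo.2.le
    rw [one_smul] at h1
    rw [lemB'] at h1
    have hz : Ξ (0 : Fin n → ℝ) i = 0 := by rw [ha0]; rfl
    rw [hz] at heq
    linarith
  -- every vertex has a neighbor
  have hadj : ∀ i, ∃ k, G.Adj k i := by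
    by_contra h
    push_neg at h
    obtain ⟨i, hi⟩ := h
    have hall : ∀ j : Fin n, j = i := by
      intro j
      obtain ⟨p⟩ := hG.preconnected i j
      cases p with
      | nil => rfl
      | cons hadj q => exact absurd hadj.symm (hi _)
    have hΞz := factZ i hi
    have hxi : xstar i = 0 := by
      have := hfe i
      rw [hΞz, mul_zero] at this
      nlinarith
    apply hx_ne
    funext j
    rw [hall j, hxi]; rfl
  -- positivity of all coordinates
  have hxpos : ∀ i, 0 < xstar i := by
    obtain ⟨i0, hi0⟩ := Function.ne_iff.mp hx_ne
    have hi0' : 0 < xstar i0 := (hx0 i0).lt_of_ne (Ne.symm hi0)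
    have step : ∀ a b, G.Adj a b → 0 < xstar a → 0 < xstar b := by
      intro a b hab hxa
      have hΞb : 0 < Ξ xstar b := factP b ⟨a, hab, hxa⟩
      rcases (hx0 b).lt_or_eq with h | h
      · exact h
      · exfalso
        have := hfe b
        rw [← h] at this
        nlinarith
    have walkpos : ∀ a b : Fin n, G.Walk a b → 0 < xstar a → 0 < xstar b := by
      intro a b p
      induction p with
      | nil => exact id
      | cons h q ih => exact fun ha => ih (step _ _ h ha)
    intro i
    exact walkpos i0 i (hG.preconnected i0 i).some hi0'
  have hΞpos : ∀ i, 0 < Ξ xstar i := by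
    intro i
    obtain ⟨k, hk⟩ := hadj i
    exact factP i ⟨k, hk, hxpos k⟩
  have hxlt1 : ∀ i, xstar i < 1 := by
    intro i
    rcases (hxle1 i).lt_or_eq with h | h
    · exact h
    · exfalso
      have := hfe i
      rw [h] at this
      nlinarith
  -- Jacobian entries
  have hJval : ∀ i j, J i j = (if i = j then (1 - δ) - Ξ xstar i else 0)
      + (1 - xstar i) * fderiv ℝ (fun y => Ξ y i) xstar (Pi.single j 1) := by
    intro i j
    rw [hJ i j]
    have he : (fun y => phiT y i) = fun y : Fin n → ℝ => (1 - δ) * y i + (1 - y i) * Ξ y i :=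
      funext fun y => hphiT y i
    rw [he]
    exact lemJac' (hdiff i) δ xstar i j
  -- the crucial strict inequality J x* < x*
  have hJx : ∀ i, J.mulVec xstar i < xstar i := by
    intro i
    have hsum : J.mulVec xstar i = ((1 - δ) - Ξ xstar i) * xstar i
        + (1 - xstar i) * ∑ j, xstar j * fderiv ℝ (fun y => Ξ y i) xstar (Pi.single j 1) := by
      have hterm : ∀ j, J i j * xstar j
          = (if i = j then ((1 - δ) - Ξ xstar i) * xstar j else 0)
            + (1 - xstar i) * (xstar j * fderiv ℝ (fun y => Ξ y i) xstar (Pi.single j 1)) := by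
        intro j
        rw [hJval]
        split_ifs <;> ring
      calc J.mulVec xstar i = ∑ j, J i j * xstar j := by
            simp [Matrix.mulVec, dotProduct]
        _ = ∑ j, ((if i = j then ((1 - δ) - Ξ xstar i) * xstar j else 0)
            + (1 - xstar i) * (xstar j * fderiv ℝ (fun y => Ξ y i) xstar (Pi.single j 1))) :=
            Finset.sum_congr rfl fun j _ => hterm j
        _ = ((1 - δ) - Ξ xstar i) * xstar i
            + (1 - xstar i) * ∑ j, xstar j * fderiv ℝ (fun y => Ξ y i) xstar (Pi.single j 1) := by
            rw [Finset.sum_add_distrib, Finset.sum_ite_eq, ← Finset.mul_sum]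
            simp
    have h1 : (1 - xstar i) * ∑ j, xstar j * fderiv ℝ (fun y => Ξ y i) xstar (Pi.single j 1)
        ≤ (1 - xstar i) * Ξ xstar i := by
      apply mul_le_mul_of_nonneg_left (factK i)
      linarith [hxlt1 i]
    nlinarith [hfe i, mul_pos (hxpos i) (hΞpos i), hsum, h1]
  -- D i i = 0
  have hDii : ∀ i, fderiv ℝ (fun y => Ξ y i) xstar (Pi.single i 1) = 0 :=
    fun i => hb_zero xstar hx_mem i i (G.irrefl)
  -- main eigenvalue argument
  intro r hr
  obtain ⟨w, hw0, hww⟩ := lemEigen' J r hr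
  have hne : Nonempty (Fin n) := ⟨⟨0, hn⟩⟩
  obtain ⟨i0, -, hmax⟩ := Finset.exists_max_image Finset.univ
    (fun i => |w i| / xstar i) Finset.univ_nonempty
  set t : ℝ := |w i0| / xstar i0 with ht
  have htw : ∀ j, |w j| ≤ t * xstar j := by
    intro j
    have h := hmax j (Finset.mem_univ j)
    rw [div_le_iff₀ (hxpos j)] at h
    linarith [h]
  have ht0 : 0 < t := by
    obtain ⟨k, hk⟩ := Function.ne_iff.mp hw0
    have h1 : 0 < |w k| / xstar k := div_pos (abs_pos.mpr hk) (hxpos k)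
    exact lt_of_lt_of_le h1 (hmax k (Finset.mem_univ k))
  have hwt : |w i0| = t * xstar i0 := by
    rw [ht, div_mul_cancel₀]
    exact (hxpos i0).ne'
  have hNnn : ∀ j, 0 ≤ J i0 j + (if i0 = j then 2 else 0) := by
    intro j
    rw [hJval]
    rcases eq_or_ne i0 j with h | h
    · subst h
      rw [hDii i0]
      simp only [if_pos rfl, mul_zero, add_zero]
      have := hΞ1 i0
      norm_num
      linarith
    · simp only [if_neg h, add_zero, zero_add]
      exact mul_nonneg (by linarith [hxlt1 i0]) (hDnn xstar hx_mem i0 j)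
  have heqv : (r + 2) * w i0 = ∑ j, (J i0 j + (if i0 = j then 2 else 0)) * w j := by
    have h1 : ∑ j, J i0 j * w j = r * w i0 := by
      have := congrFun hww i0
      simpa [Matrix.mulVec, dotProduct] using this
    have h2 : ∑ j, (if i0 = j then (2:ℝ) else 0) * w j = 2 * w i0 := by
      rw [show (fun j => (if i0 = j then (2:ℝ) else 0) * w j)
          = fun j => (if i0 = j then 2 * w j else 0) from funext fun j => by
        split_ifs <;> ring]
      rw [Finset.sum_ite_eq]
      simp
    calc (r + 2) * w i0 = r * w i0 + 2 * w i0 := by ring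
      _ = (∑ j, J i0 j * w j) + ∑ j, (if i0 = j then (2:ℝ) else 0) * w j := by rw [h1, h2]
      _ = ∑ j, (J i0 j + (if i0 = j then 2 else 0)) * w j := by
          rw [← Finset.sum_add_distrib]
          exact Finset.sum_congr rfl fun j _ => by ring
  have hNx : ∑ j, (J i0 j + (if i0 = j then 2 else 0)) * xstar j < 3 * xstar i0 := by
    have h2 : ∑ j, (if i0 = j then (2:ℝ) else 0) * xstar j = 2 * xstar i0 := by
      rw [show (fun j => (if i0 = j then (2:ℝ) else 0) * xstar j)
          = fun j => (if i0 = j then 2 * xstar j else 0) from funext fun j => by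
        split_ifs <;> ring]
      rw [Finset.sum_ite_eq]
      simp
    have h1 : ∑ j, J i0 j * xstar j = J.mulVec xstar i0 := by
      simp [Matrix.mulVec, dotProduct]
    have hsplit : ∑ j, (J i0 j + (if i0 = j then 2 else 0)) * xstar j
        = (∑ j, J i0 j * xstar j) + ∑ j, (if i0 = j then (2:ℝ) else 0) * xstar j := by
      rw [← Finset.sum_add_distrib]
      exact Finset.sum_congr rfl fun j _ => by ring
    rw [hsplit, h1, h2]
    linarith [hJx i0]
  have hchain : |r + 2| * (t * xstar i0) < 3 * (t * xstar i0) := by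
    calc |r + 2| * (t * xstar i0) = |(r + 2) * w i0| := by
          rw [abs_mul, hwt]
      _ = |∑ j, (J i0 j + (if i0 = j then 2 else 0)) * w j| := by rw [heqv]
      _ ≤ ∑ j, |(J i0 j + (if i0 = j then 2 else 0)) * w j| := Finset.abs_sum_le_sum_abs _ _
      _ ≤ ∑ j, (J i0 j + (if i0 = j then 2 else 0)) * (t * xstar j) := by
          apply Finset.sum_le_sum
          intro j _
          rw [abs_mul, abs_of_nonneg (hNnn j)]
          exact mul_le_mul_of_nonneg_left (htw j) (hNnn j)
      _ = t * ∑ j, (J i0 j + (if i0 = j then 2 else 0)) * xstar j := by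
          rw [Finset.mul_sum]
          exact Finset.sum_congr rfl fun j _ => by ring
      _ < t * (3 * xstar i0) := by
          exact mul_lt_mul_of_pos_left hNx ht0
      _ = 3 * (t * xstar i0) := by ring
  have hfin : |r + 2| < 3 :=
    lt_of_mul_lt_mul_right hchain (mul_pos ht0 (hxpos i0)).le
  have := abs_lt.mp hfin
  linarith [this.2]
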